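/- Let A → B and B → C be ring homomorphisms such that the composite A → C is flat and B → C is faithfully flat. Then A → B is flat. -/
import Mathlib

open TensorProduct LinearMap

set_option maxHeartbeats 2000000
set_option synthInstance.maxHeartbeats 400000

/-- Faithfully flat modules reflect injectivity under `lTensor`. -/
lemma ff_reflects_injective (R M : Type*) [CommRing R] [AddCommGroup M] [Module R M]
    [Module.FaithfullyFlat R M] {N N' : Type*} [AddCommGroup N] [Module R N]
    [AddCommGroup N'] [Module R N'] (g : N →ₗ[R] N')
    (h : Function.Injective (lTensor M g)) : Function.Injective g := by
  have hex := Module.FaithfullyFlat.lTensor_reflects_exact R M (0 : N →ₗ[R] N) g ?_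
  · rw [← LinearMap.ker_eq_bot, Function.Exact.linearMap_ker_eq hex]
    simp
  · rw [LinearMap.exact_iff, lTensor_zero, LinearMap.range_zero, LinearMap.ker_eq_bot]
    exact h

/-- If `A → B → C` are ring maps with `A → C` flat and `B → C` faithfully flat,
then `A → B` is flat. -/
theorem stmt_6 (A B C : Type*) [CommRing A] [CommRing B] [CommRing C]
    [Algebra A B] [Algebra B C] [Algebra A C] [IsScalarTower A B C]
    [Module.Flat A C] [Module.FaithfullyFlat B C] :
    Module.Flat A B := by
  rw [Module.Flat.iff_lTensor_injective']
  intro I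
  -- the B-linear version of `lTensor B I.subtype`
  set g : B ⊗[A] I →ₗ[B] B ⊗[A] A := LinearMap.baseChange B I.subtype with hg
  have hres : ∀ x, g x = lTensor B I.subtype x := fun _ => rfl
  suffices h : Function.Injective g by
    intro x y hxy
    exact h (by rw [hres, hres]; exact hxy)
  apply ff_reflects_injective B C g
  -- identify `lTensor C g` with `lTensor C I.subtype` via `cancelBaseChange`
  have key : ∀ x, lTensor C g x =
      (AlgebraTensorModule.cancelBaseChange A B C C A).symm
        (lTensor C (I.subtype) (AlgebraTensorModule.cancelBaseChange A B C C I x)) := by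
    intro x
    induction x using TensorProduct.induction_on with
    | zero => rw [map_zero, map_zero, map_zero, map_zero]
    | tmul c y =>
      induction y using TensorProduct.induction_on with
      | zero => rw [tmul_zero, map_zero, map_zero, map_zero, map_zero]
      | tmul b i =>
        rw [AlgebraTensorModule.cancelBaseChange_tmul]
        rw [show (lTensor C (I.subtype)) ((b • c) ⊗ₜ[A] i) = (b • c) ⊗ₜ[A] (i : A) from rfl]
        rw [AlgebraTensorModule.cancelBaseChange_symm_tmul]
        rw [show (lTensor C g) (c ⊗ₜ[B] (b ⊗ₜ[A] i)) = c ⊗ₜ[B] (b ⊗ₜ[A] (i : A)) from rfl]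
        rw [TensorProduct.smul_tmul, TensorProduct.smul_tmul']
        rw [smul_eq_mul, mul_one]
      | add y z hy hz =>
        rw [tmul_add, map_add, map_add, map_add, map_add, hy, hz]
    | add x y hx hy => rw [map_add, map_add, map_add, map_add, hx, hy]
  intro x y hxy
  rw [key, key] at hxy
  exact (AlgebraTensorModule.cancelBaseChange A B C C I).injective
    (Module.Flat.lTensor_preserves_injective_linearMap (M := C) (I.subtype)
      Subtype.coe_injective
      ((AlgebraTensorModule.cancelBaseChange A B C C A).symm.injective hxy))
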